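/- For a Poisson random variable Q with mean μ > 0 and integer a ≥ 1, E[1/(Q+a)] = ((a-1)! (-1)^{a-1} / μ^a) (1 - e^{-μ} + Σ_{j=1}^{a-1} (-μ)^j / j!). -/

import Mathlib

private lemma exp_tsum (x : ℝ) : Real.exp x = ∑' n : ℕ, x ^ n / (n.factorial : ℝ) := by
  rw [Real.exp_eq_exp_ℝ, NormedSpace.exp_eq_tsum_div]

private lemma sumG (μ : ℝ) (hμ : 0 ≤ μ) (a : ℕ) (ha : 1 ≤ a) :
    Summable fun k : ℕ => μ ^ k / ((k.factorial : ℝ) * ((k : ℝ) + (a : ℝ))) := by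
  refine Summable.of_nonneg_of_le (fun k => by positivity) (fun k => ?_)
    (Real.summable_pow_div_factorial μ)
  have h1 : (1:ℝ) ≤ (k:ℝ) + (a:ℝ) := by
    have h2 : (1:ℝ) ≤ (a:ℝ) := by exact_mod_cast ha
    have h3 : (0:ℝ) ≤ (k:ℝ) := Nat.cast_nonneg k
    linarith
  have hf : (0:ℝ) < (k.factorial : ℝ) := by
    exact_mod_cast k.factorial_pos
  calc μ ^ k / ((k.factorial : ℝ) * ((k : ℝ) + (a : ℝ)))
      ≤ μ ^ k / ((k.factorial : ℝ) * 1) := by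
        gcongr
    _ = μ ^ k / (k.factorial : ℝ) := by rw [mul_one]

private lemma recG (μ : ℝ) (hμ : 0 < μ) (a : ℕ) (ha : 1 ≤ a) :
    μ * ∑' k : ℕ, μ ^ k / ((k.factorial : ℝ) * ((k : ℝ) + (a : ℝ) + 1)) =
      Real.exp μ - (a : ℝ) * ∑' k : ℕ, μ ^ k / ((k.factorial : ℝ) * ((k : ℝ) + (a : ℝ))) := by
  have haR : (1:ℝ) ≤ (a:ℝ) := by exact_mod_cast ha
  set f : ℕ → ℝ := fun k => μ ^ k * (k : ℝ) / ((k.factorial : ℝ) * ((k : ℝ) + (a : ℝ))) with hf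
  have hsum1 := Real.summable_pow_div_factorial μ
  have hsumG := sumG μ hμ.le a ha
  have hden : ∀ k : ℕ, ((k:ℝ) + (a:ℝ)) ≠ 0 := by
    intro k
    have : (0:ℝ) ≤ (k:ℝ) := Nat.cast_nonneg k
    positivity
  have hfac : ∀ k : ℕ, ((k.factorial : ℝ)) ≠ 0 := by
    intro k; exact_mod_cast k.factorial_ne_zero
  have hpt : ∀ k : ℕ, f k = μ ^ k / (k.factorial : ℝ)
      - (a : ℝ) * (μ ^ k / ((k.factorial : ℝ) * ((k : ℝ) + (a : ℝ)))) := by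
    intro k
    simp only [hf]
    field_simp
    ring
  have hfsum : Summable f :=
    (hsum1.sub (hsumG.mul_left (a:ℝ))).congr fun k => (hpt k).symm
  have h2 : ∀ k : ℕ, μ * (μ ^ k / ((k.factorial : ℝ) * ((k : ℝ) + (a : ℝ) + 1))) = f (k+1) := by
    intro k
    simp only [hf, Nat.factorial_succ]
    push_cast
    have hk1 : ((k:ℝ) + 1) ≠ 0 := by positivity
    have hd : ((k:ℝ) + 1 + (a:ℝ)) ≠ 0 := by positivity
    have hd2 : ((k:ℝ) + (a:ℝ) + 1) ≠ 0 := by positivity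
    field_simp
    ring
  calc μ * ∑' k : ℕ, μ ^ k / ((k.factorial : ℝ) * ((k : ℝ) + (a : ℝ) + 1))
      = ∑' k : ℕ, μ * (μ ^ k / ((k.factorial : ℝ) * ((k : ℝ) + (a : ℝ) + 1))) :=
        (tsum_mul_left).symm
    _ = ∑' k : ℕ, f (k + 1) := tsum_congr h2
    _ = f 0 + ∑' k : ℕ, f (k + 1) := by
        simp [hf]
    _ = ∑' k : ℕ, f k := (Summable.tsum_eq_zero_add hfsum).symm
    _ = ∑' k : ℕ, (μ ^ k / (k.factorial : ℝ)
          - (a : ℝ) * (μ ^ k / ((k.factorial : ℝ) * ((k : ℝ) + (a : ℝ))))) := tsum_congr hpt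
    _ = (∑' k : ℕ, μ ^ k / (k.factorial : ℝ))
          - ∑' k : ℕ, (a : ℝ) * (μ ^ k / ((k.factorial : ℝ) * ((k : ℝ) + (a : ℝ)))) :=
        Summable.tsum_sub hsum1 (hsumG.mul_left (a:ℝ))
    _ = Real.exp μ - (a : ℝ) * ∑' k : ℕ, μ ^ k / ((k.factorial : ℝ) * ((k : ℝ) + (a : ℝ))) := by
        rw [← exp_tsum, tsum_mul_left]

private lemma Gform (μ : ℝ) (hμ : 0 < μ) : ∀ b : ℕ,
    ∑' k : ℕ, μ ^ k / ((k.factorial : ℝ) * ((k : ℝ) + (b : ℝ) + 1)) =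
      ((b.factorial : ℝ) * (-1) ^ b / μ ^ (b+1)) *
        (Real.exp μ * (∑ j ∈ Finset.range (b+1), (-μ) ^ j / (j.factorial : ℝ)) - 1) := by
  intro b
  induction b with
  | zero =>
      simp only [Nat.cast_zero]
      have key : ∀ k : ℕ, μ ^ k / ((k.factorial : ℝ) * ((k : ℝ) + 0 + 1))
          = μ ^ k / (((k+1).factorial : ℝ)) := by
        intro k
        rw [Nat.factorial_succ]
        push_cast
        ring_nf
      have hsum1 := Real.summable_pow_div_factorial μ
      have hmul : μ * ∑' k : ℕ, μ ^ k / (((k+1).factorial : ℝ)) = Real.exp μ - 1 := by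
        rw [← tsum_mul_left]
        have h3 : ∀ k : ℕ, μ * (μ ^ k / (((k+1).factorial : ℝ))) = μ ^ (k+1) / (((k+1).factorial : ℝ)) := by
          intro k
          rw [pow_succ]
          ring
        rw [tsum_congr h3]
        have h4 := Summable.tsum_eq_zero_add hsum1
        rw [exp_tsum]
        simp only [pow_zero, Nat.factorial_zero, Nat.cast_one] at h4
        rw [h4]
        ring
      rw [tsum_congr key]
      have ht : ∑' k : ℕ, μ ^ k / (((k+1).factorial : ℝ)) = (Real.exp μ - 1)/μ := by
        rw [eq_div_iff hμ.ne']
        linear_combination hmul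
      rw [ht]
      simp only [Nat.factorial_zero, Nat.cast_one, pow_zero, zero_add, pow_one,
        Finset.range_one, Finset.sum_singleton, one_mul, mul_one, Nat.cast_zero]
      field_simp
  | succ b ih =>
      have hrec := recG μ hμ (b+1) (Nat.le_add_left 1 b)
      push_cast at hrec ⊢
      simp only [← add_assoc] at hrec ⊢
      have hstep : ∑' k : ℕ, μ ^ k / ((k.factorial : ℝ) * ((k : ℝ) + (b:ℝ) + 1 + 1)) =
          (Real.exp μ - ((b:ℝ)+1) * ∑' k : ℕ, μ ^ k / ((k.factorial : ℝ) * ((k : ℝ) + (b:ℝ) + 1))) / μ := by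
        rw [eq_div_iff hμ.ne']
        linear_combination hrec
      rw [hstep, ih,
        Finset.sum_range_succ (fun j => (-μ) ^ j / (j.factorial : ℝ)) (b+1)]
      have hfac : ((b.factorial : ℝ)) ≠ 0 := by exact_mod_cast b.factorial_ne_zero
      have hp : μ ^ (b+1) ≠ 0 := pow_ne_zero _ hμ.ne'
      rw [Nat.factorial_succ]
      push_cast
      set E := Real.exp μ
      set S := ∑ j ∈ Finset.range (b+1), (-μ) ^ j / (j.factorial : ℝ)
      rw [show (-μ) ^ (b+1) = (-1)^(b+1) * μ^(b+1) by rw [neg_pow]]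
      rw [pow_succ (-1:ℝ) b, pow_succ μ (b+1)]
      set p := μ ^ (b+1)
      set x := (-1:ℝ) ^ b
      set c := (b.factorial : ℝ)
      field_simp
      ring_nf
      rw [show x ^ 2 = 1 by rw [show x = (-1:ℝ)^b from rfl, ← pow_mul, mul_comm, pow_mul, neg_one_sq, one_pow]]
      ring

theorem poisson_inv_moment_explicit (μ : ℝ) (hμ : 0 < μ) (a : ℕ) (ha : 1 ≤ a) :
    ∑' k : ℕ, Real.exp (-μ) * μ ^ k / ((k.factorial : ℝ) * ((k : ℝ) + (a : ℝ))) =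
      (((a - 1).factorial : ℝ) * (-1) ^ (a - 1) / μ ^ a) *
        (1 - Real.exp (-μ) + ∑ j ∈ Finset.Icc 1 (a - 1), (-μ) ^ j / (j.factorial : ℝ)) := by
  obtain ⟨b, rfl⟩ : ∃ b, a = b + 1 := ⟨a - 1, (Nat.succ_pred_eq_of_pos ha).symm⟩
  simp only [Nat.add_sub_cancel]
  have h1 : ∀ k : ℕ, Real.exp (-μ) * μ ^ k / ((k.factorial : ℝ) * ((k : ℝ) + ((b:ℕ)+1 : ℕ))) =
      Real.exp (-μ) * (μ ^ k / ((k.factorial : ℝ) * ((k : ℝ) + (b:ℝ) + 1))) := by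
    intro k
    push_cast
    ring
  rw [tsum_congr h1, tsum_mul_left, Gform μ hμ b]
  have hE : Real.exp (-μ) * Real.exp μ = 1 := by
    rw [← Real.exp_add]; simp
  have hS : ∑ j ∈ Finset.range (b+1), (-μ) ^ j / (j.factorial : ℝ)
      = 1 + ∑ j ∈ Finset.Icc 1 b, (-μ) ^ j / (j.factorial : ℝ) := by
    have hins : Finset.range (b+1) = insert 0 (Finset.Icc 1 b) := by
      ext x
      simp only [Finset.mem_range, Finset.mem_insert, Finset.mem_Icc]
      omega
    rw [hins, Finset.sum_insert (by simp)]
    simp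
  rw [hS]
  set T := ∑ j ∈ Finset.Icc 1 b, (-μ) ^ j / (j.factorial : ℝ)
  set E := Real.exp μ
  set F := Real.exp (-μ)
  linear_combination (((b.factorial : ℝ) * (-1)^b / μ^(b+1)) * (1 + T)) * hE
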